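/- For i ∈ π₊(ε), the following multiplication rule holds pointwise in F(ℰ; S): σ_{(i)} · σ_ε = σ_{(i)}(ε) · σ_ε + Σ_{j < i, j ∈ π₋(ε)} c_j · σ_{ε + (j)}, where c_j = (s_{μ_j}(α_j^i(ε)) − α_j^i(ε))/μ_j ∈ ℤ and α_j^i(ε) = v_{j+1}^{i−1}(ε)(μ_i) with v_a^b(ε) = ∏_{a ≤ k ≤ b, k ∈ π₊(ε)} s_{μ_k}. -/

import Mathlib

open scoped Classical

/-- The simple root `α_b`, as a vector in the span `B → ℚ` of the simple roots. -/
noncomputable def simpleRoot {B : Type} [DecidableEq B] (b : B) : B → ℚ := Pi.single b 1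

/-- The pairing `⟨x, α_b^∨⟩` determined by the Cartan matrix `Cmat` (so that
`⟨α_a, α_b^∨⟩ = Cmat a b`). -/
noncomputable def pairC {B : Type} [Fintype B] (Cmat : B → B → ℤ) (x : B → ℚ) (b : B) : ℚ :=
  ∑ a, x a * (Cmat a b : ℚ)

/-- The simple reflection `s_b : x ↦ x - ⟨x, α_b^∨⟩ α_b`. -/
noncomputable def srefl {B : Type} [Fintype B] [DecidableEq B] (Cmat : B → B → ℤ) (b : B)
    (x : B → ℚ) : B → ℚ :=
  x - pairC Cmat x b • simpleRoot b

/-- Apply a word `s_{b_1} s_{b_2} ⋯ s_{b_k}` of simple reflections to `x`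
(leftmost factor applied last). -/
noncomputable def applyWord {B : Type} [Fintype B] [DecidableEq B] (Cmat : B → B → ℤ)
    (w : List B) (x : B → ℚ) : B → ℚ :=
  w.foldr (fun b y => srefl Cmat b y) x

/-- The word `(μ_k)_{k ∈ π₊(ε), k < i}`, in increasing order of `k`. -/
def wordBelow {B : Type} {n : ℕ} (μ : Fin n → B) (ε : Fin n → Bool) (i : Fin n) : List B :=
  ((List.finRange n).filter (fun k => ε k && decide (k < i))).map μ

/-- The word `(μ_k)_{k ∈ π₊(ε)}`, in increasing order of `k`. -/
def wordOf {B : Type} {n : ℕ} (μ : Fin n → B) (ε : Fin n → Bool) : List B :=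
  ((List.finRange n).filter (fun k => ε k)).map μ

/-- `α_i(ε) = v_{i-1}(ε)(μ_i)`. -/
noncomputable def alphaE {B : Type} [Fintype B] [DecidableEq B] (Cmat : B → B → ℤ) {n : ℕ}
    (μ : Fin n → B) (ε : Fin n → Bool) (i : Fin n) : B → ℚ :=
  applyWord Cmat (wordBelow μ ε i) (simpleRoot (μ i))

/-- The order `ε ≤ ε'` on `ℰ = {0,1}^N`: containment of supports `π₊(ε) ⊆ π₊(ε')`. -/
def leE {n : ℕ} (ε ε' : Fin n → Bool) : Prop := ∀ k, ε k = true → ε' k = true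

/-- `l(ε) = card π₊(ε)`. -/
def lE {n : ℕ} (ε : Fin n → Bool) : ℕ := (Finset.univ.filter (fun k : Fin n => ε k = true)).card

/-- The linear embedding of the weight space into `S = Sym(𝔥^*) = ℚ[X_b : b ∈ B]`. -/
noncomputable def toS {B : Type} [Fintype B] (x : B → ℚ) : MvPolynomial B ℚ :=
  ∑ b, MvPolynomial.C (x b) * MvPolynomial.X b

/-- `σ_ε : ℰ → S`, `σ_ε(ε') = ∏_{i ∈ π₊(ε)} α_i(ε')` if `ε ≤ ε'`, and `0` otherwise. -/
noncomputable def sigE {B : Type} [Fintype B] [DecidableEq B] (Cmat : B → B → ℤ) {n : ℕ}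
    (μ : Fin n → B) (ε ε' : Fin n → Bool) : MvPolynomial B ℚ :=
  if leE ε ε' then ∏ i ∈ Finset.univ.filter (fun i : Fin n => ε i = true), toS (alphaE Cmat μ ε' i)
  else 0

/-- The indicator element `(i) ∈ ℰ`. -/
def indE {n : ℕ} (i : Fin n) : Fin n → Bool := fun k => decide (k = i)

/-- Addition in `ℰ = (ℤ/2)^N`. -/
def addE {n : ℕ} (ε η : Fin n → Bool) : Fin n → Bool := fun k => xor (ε k) (η k)

/-- A word is reduced if no shorter word of simple reflections represents the same
Weyl-group element. -/
def IsReducedWord {B : Type} [Fintype B] [DecidableEq B] (Cmat : B → B → ℤ) (w : List B) : Prop :=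
  ∀ w' : List B, applyWord Cmat w' = applyWord Cmat w → w.length ≤ w'.length

/-- `x` is a (real) root: the image of a simple root under a product of simple reflections. -/
def IsRoot {B : Type} [Fintype B] [DecidableEq B] (Cmat : B → B → ℤ) (x : B → ℚ) : Prop :=
  ∃ (w : List B) (b : B), x = applyWord Cmat w (simpleRoot b)

/-- `x` is a positive root. -/
def IsPos {B : Type} [Fintype B] [DecidableEq B] (Cmat : B → B → ℤ) (x : B → ℚ) : Prop :=
  IsRoot Cmat x ∧ ∀ b, 0 ≤ x b

/-- `x` is a negative root. -/
def IsNeg {B : Type} [Fintype B] [DecidableEq B] (Cmat : B → B → ℤ) (x : B → ℚ) : Prop :=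
  IsRoot Cmat x ∧ ∀ b, x b ≤ 0

/-- `Cmat` is a generalized Cartan matrix. -/
def IsGCM {B : Type} (Cmat : B → B → ℤ) : Prop :=
  (∀ b, Cmat b b = 2) ∧ (∀ a b, a ≠ b → Cmat a b ≤ 0) ∧ (∀ a b, Cmat a b = 0 → Cmat b a = 0)

/-- `α_j^i(ε) = v_{j+1}^{i-1}(ε)(μ_i)`, the product of the reflections `s_{μ_k}` for
`j < k < i`, `k ∈ π₊(ε)` (increasing order), applied to `μ_i`. -/
noncomputable def alphaJI {B : Type} [Fintype B] [DecidableEq B] (Cmat : B → B → ℤ) {n : ℕ}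
    (μ : Fin n → B) (ε : Fin n → Bool) (j i : Fin n) : B → ℚ :=
  applyWord Cmat (((List.finRange n).filter (fun k => ε k && decide (j < k) && decide (k < i))).map μ)
    (simpleRoot (μ i))

/-- `c_j = (s_{μ_j}(α_j^i(ε)) − α_j^i(ε))/μ_j`: the scalar `c` with
`s_{μ_j}(α_j^i(ε)) − α_j^i(ε) = c • α_{μ_j}`, namely `−⟨α_j^i(ε), μ_j^∨⟩`. -/
noncomputable def cJ {B : Type} [Fintype B] [DecidableEq B] (Cmat : B → B → ℤ) {n : ℕ}
    (μ : Fin n → B) (ε : Fin n → Bool) (j i : Fin n) : ℚ :=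
  -(pairC Cmat (alphaJI Cmat μ ε j i) (μ j))


section AuxLemmas

variable {B : Type} [Fintype B] [DecidableEq B] (Cmat : B → B → ℤ)

lemma pairC_add (x y : B → ℚ) (b : B) :
    pairC Cmat (x + y) b = pairC Cmat x b + pairC Cmat y b := by
  simp [pairC, add_mul, Finset.sum_add_distrib]

lemma pairC_smul (c : ℚ) (x : B → ℚ) (b : B) :
    pairC Cmat (c • x) b = c * pairC Cmat x b := by
  simp [pairC, Finset.mul_sum, mul_assoc]

lemma srefl_add_smul (b : B) (x z : B → ℚ) (c : ℚ) :
    srefl Cmat b (x + c • z) = srefl Cmat b x + c • srefl Cmat b z := by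
  unfold srefl
  rw [pairC_add, pairC_smul]
  ext a
  simp only [Pi.add_apply, Pi.sub_apply, Pi.smul_apply, smul_eq_mul]
  ring

lemma applyWord_cons (b : B) (w : List B) (x : B → ℚ) :
    applyWord Cmat (b :: w) x = srefl Cmat b (applyWord Cmat w x) := rfl

lemma applyWord_add_smul (w : List B) (x z : B → ℚ) (c : ℚ) :
    applyWord Cmat w (x + c • z) = applyWord Cmat w x + c • applyWord Cmat w z := by
  induction w with
  | nil => rfl
  | cons b w ih =>
      rw [applyWord_cons, ih, srefl_add_smul, applyWord_cons, applyWord_cons]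

lemma applyWord_append (w₁ w₂ : List B) (x : B → ℚ) :
    applyWord Cmat (w₁ ++ w₂) x = applyWord Cmat w₁ (applyWord Cmat w₂ x) := by
  simp [applyWord, List.foldr_append]

lemma srefl_eq_add (b : B) (x : B → ℚ) :
    srefl Cmat b x = x + (-(pairC Cmat x b)) • simpleRoot b := by
  rw [srefl, neg_smul, ← sub_eq_add_neg]

lemma toS_zero : toS (0 : B → ℚ) = 0 := by
  simp [toS]

lemma toS_add (x y : B → ℚ) : toS (x + y) = toS x + toS y := by
  simp [toS, add_mul, Finset.sum_add_distrib]

lemma toS_smul (c : ℚ) (x : B → ℚ) :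
    toS (c • x) = MvPolynomial.C c * toS x := by
  simp [toS, Finset.mul_sum, mul_assoc, map_mul]

lemma toS_sum {α : Type*} (s : Finset α) (f : α → B → ℚ) :
    toS (∑ j ∈ s, f j) = ∑ j ∈ s, toS (f j) := by
  classical
  induction s using Finset.induction_on with
  | empty => simp [toS_zero]
  | @insert a s h ih => rw [Finset.sum_insert h, Finset.sum_insert h, toS_add, ih]

/-- Integrality. -/
def IsIntVec {B : Type} (x : B → ℚ) : Prop := ∀ b, ∃ m : ℤ, x b = m

lemma isIntVec_simpleRoot (b : B) : IsIntVec (simpleRoot b) := by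
  intro a
  by_cases h : a = b
  · exact ⟨1, by subst h; simp [simpleRoot]⟩
  · exact ⟨0, by simp [simpleRoot, Pi.single_apply, h]⟩

lemma pairC_int {x : B → ℚ} (hx : IsIntVec x) (b : B) :
    ∃ m : ℤ, pairC Cmat x b = m := by
  choose m hm using hx
  refine ⟨∑ a, m a * Cmat a b, ?_⟩
  rw [pairC]
  push_cast
  exact Finset.sum_congr rfl fun a _ => by rw [hm]

lemma isIntVec_srefl {x : B → ℚ} (hx : IsIntVec x) (b : B) :
    IsIntVec (srefl Cmat b x) := by
  intro a
  obtain ⟨p, hp⟩ := pairC_int Cmat hx b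
  obtain ⟨q, hq⟩ := hx a
  obtain ⟨r, hr⟩ := isIntVec_simpleRoot b a
  refine ⟨q - p * r, ?_⟩
  simp only [srefl, Pi.sub_apply, Pi.smul_apply, smul_eq_mul, hp, hq, hr]
  push_cast
  ring

lemma isIntVec_applyWord (w : List B) {x : B → ℚ} (hx : IsIntVec x) :
    IsIntVec (applyWord Cmat w x) := by
  induction w with
  | nil => exact hx
  | cons b w ih => exact isIntVec_srefl Cmat ih b

/-! ### List filtering lemmas -/

lemma filter_split_le {n : ℕ} (j : Fin n) (q : Fin n → Bool) :
    ∀ l : List (Fin n), l.Pairwise (· < ·) →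
      l.filter q =
        l.filter (fun k => q k && decide (k < j)) ++ l.filter (fun k => q k && decide (j ≤ k)) := by
  intro l
  induction l with
  | nil => simp
  | cons a l ih =>
    intro hl
    rw [List.pairwise_cons] at hl
    by_cases haj : a < j
    · have h1 : decide (a < j) = true := decide_eq_true haj
      have h2 : decide (j ≤ a) = false := decide_eq_false (not_le.mpr haj)
      simp only [List.filter_cons, h1, h2, Bool.and_true, Bool.and_false]
      cases hq : q a
      · simp [ih hl.2]
      · simp [ih hl.2]
    · push_neg at haj
      have h1 : (a :: l).filter (fun k => q k && decide (k < j)) = [] := by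
        rw [List.filter_eq_nil_iff]
        intro b hb
        have hb' : ¬ b < j := by
          rcases List.mem_cons.mp hb with rfl | hb
          · exact not_lt.mpr haj
          · exact not_lt.mpr (haj.trans (hl.1 b hb).le)
        simp [hb']
      have h2 : (a :: l).filter (fun k => q k && decide (j ≤ k)) = (a :: l).filter q := by
        apply List.filter_congr
        intro b hb
        have hb' : j ≤ b := by
          rcases List.mem_cons.mp hb with rfl | hb
          · exact haj
          · exact haj.trans (hl.1 b hb).le
        simp [hb']
      rw [h1, h2, List.nil_append]

lemma filter_split_lt {n : ℕ} (j : Fin n) (q : Fin n → Bool) :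
    ∀ l : List (Fin n), l.Pairwise (· < ·) →
      l.filter q =
        l.filter (fun k => q k && decide (k ≤ j)) ++ l.filter (fun k => q k && decide (j < k)) := by
  intro l
  induction l with
  | nil => simp
  | cons a l ih =>
    intro hl
    rw [List.pairwise_cons] at hl
    by_cases haj : a ≤ j
    · have h1 : decide (a ≤ j) = true := decide_eq_true haj
      have h2 : decide (j < a) = false := decide_eq_false (not_lt.mpr haj)
      simp only [List.filter_cons, h1, h2, Bool.and_true, Bool.and_false]
      cases hq : q a
      · simp [ih hl.2]
      · simp [ih hl.2]
    · push_neg at haj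
      have h1 : (a :: l).filter (fun k => q k && decide (k ≤ j)) = [] := by
        rw [List.filter_eq_nil_iff]
        intro b hb
        have hb' : ¬ b ≤ j := by
          rcases List.mem_cons.mp hb with rfl | hb
          · exact not_le.mpr haj
          · exact not_le.mpr (haj.trans (hl.1 b hb))
        simp [hb']
      have h2 : (a :: l).filter (fun k => q k && decide (j < k)) = (a :: l).filter q := by
        apply List.filter_congr
        intro b hb
        have hb' : j < b := by
          rcases List.mem_cons.mp hb with rfl | hb
          · exact haj
          · exact haj.trans (hl.1 b hb)
        simp [hb']
      rw [h1, h2, List.nil_append]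

lemma filter_eq_singleton {n : ℕ} (j : Fin n) :
    ∀ l : List (Fin n), l.Nodup → j ∈ l →
      l.filter (fun k => decide (k = j)) = [j] := by
  intro l
  induction l with
  | nil => simp
  | cons a l ih =>
    intro hnd hmem
    have hnd' := List.nodup_cons.mp hnd
    rcases List.mem_cons.mp hmem with rfl | hj
    · have hf : l.filter (fun k => decide (k = j)) = [] := by
        rw [List.filter_eq_nil_iff]
        intro b hb
        have hbj : ¬ b = j := fun h => hnd'.1 (h ▸ hb)
        simp [hbj]
      simp [List.filter_cons, hf]
    · have haj : a ≠ j := fun h => hnd'.1 (h ▸ hj)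
      simp only [List.filter_cons, haj, decide_eq_false haj, Bool.false_eq_true, if_false]
      exact ih hnd'.2 hj

lemma filter_below_split {n : ℕ} (ε : Fin n → Bool) {i j : Fin n} (hji : j < i)
    (hεj : ε j = false) :
    (List.finRange n).filter (fun k => ε k && decide (k < i)) =
      (List.finRange n).filter (fun k => ε k && decide (k < j)) ++
        (List.finRange n).filter (fun k => ε k && decide (j < k) && decide (k < i)) := by
  rw [filter_split_le j (fun k => ε k && decide (k < i)) _ (List.pairwise_lt_finRange n)]
  congr 1
  · apply List.filter_congr
    intro k _
    by_cases hk : k < j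
    · simp [hk, hk.trans hji]
    · simp [hk]
  · apply List.filter_congr
    intro k _
    by_cases hk : k = j
    · subst hk; simp [hεj]
    · by_cases hk2 : j < k
      · simp [hk2, hk2.le, Bool.and_assoc, Bool.and_comm]
      · have : ¬ j ≤ k := fun h => hk (le_antisymm (not_lt.mp hk2) h)
        simp [this, hk2]

lemma filter_update_split {n : ℕ} (ε : Fin n → Bool) {i j : Fin n} (hji : j < i) :
    (List.finRange n).filter (fun k => Function.update ε j true k && decide (k < i)) =
      (List.finRange n).filter (fun k => ε k && decide (k < j)) ++
        j :: (List.finRange n).filter (fun k => ε k && decide (j < k) && decide (k < i)) := by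
  rw [filter_split_le j (fun k => Function.update ε j true k && decide (k < i)) _
    (List.pairwise_lt_finRange n)]
  congr 1
  · apply List.filter_congr
    intro k _
    by_cases hk : k < j
    · simp [hk, hk.trans hji, Function.update_of_ne (ne_of_lt hk)]
    · simp [hk]
  · rw [filter_split_lt j _ _ (List.pairwise_lt_finRange n)]
    have h2a : (List.finRange n).filter
        (fun k => Function.update ε j true k && decide (k < i) && decide (j ≤ k) && decide (k ≤ j))
        = [j] := by
      rw [← filter_eq_singleton j (List.finRange n) (List.nodup_finRange n) (List.mem_finRange j)]
      apply List.filter_congr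
      intro k _
      by_cases hk : k = j
      · subst hk; simp [Function.update_self, hji]
      · by_cases h1 : j ≤ k
        · have h2 : ¬ k ≤ j := fun h2 => hk (le_antisymm h2 h1)
          simp [h2, hk]
        · simp [h1, hk]
    have h2b : (List.finRange n).filter
        (fun k => Function.update ε j true k && decide (k < i) && decide (j ≤ k) && decide (j < k))
        = (List.finRange n).filter (fun k => ε k && decide (j < k) && decide (k < i)) := by
      apply List.filter_congr
      intro k _
      by_cases hk : j < k
      · simp [hk, hk.le, Function.update_of_ne (ne_of_lt hk).symm]
      · simp [hk]
    rw [h2a, h2b]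
    rfl


section AlphaLemmas

variable {B : Type} [Fintype B] [DecidableEq B] (Cmat : B → B → ℤ) {n : ℕ} (μ : Fin n → B)

lemma alphaE_congr {ε ε' : Fin n → Bool} (i : Fin n) (h : ∀ k, k < i → ε k = ε' k) :
    alphaE Cmat μ ε i = alphaE Cmat μ ε' i := by
  have hw : wordBelow μ ε i = wordBelow μ ε' i := by
    unfold wordBelow
    congr 1
    apply List.filter_congr
    intro k _
    by_cases hk : k < i
    · rw [h k hk]
    · simp [hk]
  unfold alphaE
  rw [hw]

lemma cJ_congr {ε ε' : Fin n → Bool} (j i : Fin n) (h : ∀ k, j < k → k < i → ε k = ε' k) :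
    cJ Cmat μ ε j i = cJ Cmat μ ε' j i := by
  have hw : ((List.finRange n).filter (fun k => ε k && decide (j < k) && decide (k < i))) =
      ((List.finRange n).filter (fun k => ε' k && decide (j < k) && decide (k < i))) := by
    apply List.filter_congr
    intro k _
    by_cases h1 : j < k
    · by_cases h2 : k < i
      · rw [h k h1 h2]
      · simp [h2]
    · simp [h1]
  unfold cJ alphaJI
  rw [hw]

lemma alphaE_update (ε : Fin n → Bool) {i j : Fin n} (hji : j < i) (hεj : ε j = false) :
    alphaE Cmat μ (Function.update ε j true) i =
      alphaE Cmat μ ε i + cJ Cmat μ ε j i • alphaE Cmat μ ε j := by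
  have key : wordBelow μ (Function.update ε j true) i =
      wordBelow μ ε j ++ μ j ::
        ((List.finRange n).filter (fun k => ε k && decide (j < k) && decide (k < i))).map μ := by
    unfold wordBelow
    rw [filter_update_split ε hji, List.map_append, List.map_cons]
  have key2 : wordBelow μ ε i =
      wordBelow μ ε j ++
        ((List.finRange n).filter (fun k => ε k && decide (j < k) && decide (k < i))).map μ := by
    unfold wordBelow
    rw [filter_below_split ε hji hεj, List.map_append]
  unfold alphaE
  rw [key, key2, applyWord_append, applyWord_append, applyWord_cons, srefl_eq_add,
    applyWord_add_smul]
  rfl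

lemma alphaE_key (ε' : Fin n → Bool) (i : Fin n) :
    ∀ (m : ℕ) (ε : Fin n → Bool), leE ε ε' →
      (Finset.univ.filter (fun j : Fin n => j < i ∧ ε j = false ∧ ε' j = true)).card = m →
      alphaE Cmat μ ε' i = alphaE Cmat μ ε i +
        ∑ j ∈ Finset.univ.filter (fun j : Fin n => j < i ∧ ε j = false ∧ ε' j = true),
          cJ Cmat μ ε j i • alphaE Cmat μ ε' j := by
  intro m
  induction m with
  | zero =>
    intro ε hle hm
    have hD : Finset.univ.filter (fun j : Fin n => j < i ∧ ε j = false ∧ ε' j = true) = ∅ :=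
      Finset.card_eq_zero.mp hm
    rw [hD, Finset.sum_empty, add_zero]
    apply alphaE_congr
    intro k hk
    cases hεk : ε k with
    | true => exact hle k hεk
    | false =>
      cases hε'k : ε' k with
      | false => rfl
      | true =>
        exfalso
        have : k ∈ Finset.univ.filter (fun j : Fin n => j < i ∧ ε j = false ∧ ε' j = true) := by
          simp [Finset.mem_filter, hk, hεk, hε'k]
        rw [hD] at this
        exact absurd this (Finset.notMem_empty k)
  | succ m ih =>
    intro ε hle hm
    set D := Finset.univ.filter (fun j : Fin n => j < i ∧ ε j = false ∧ ε' j = true) with hD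
    have hne : D.Nonempty := Finset.card_pos.mp (by omega)
    set j0 := D.min' hne with hj0
    have hj0D : j0 ∈ D := D.min'_mem hne
    have hj0D' := hj0D
    rw [hD, Finset.mem_filter] at hj0D'
    obtain ⟨-, hj0i, hεj0, hε'j0⟩ := hj0D'
    set η := Function.update ε j0 true with hη
    have hleη : leE η ε' := by
      intro k hk
      by_cases hkj : k = j0
      · subst hkj; exact hε'j0
      · rw [hη, Function.update_of_ne hkj] at hk
        exact hle k hk
    have hDη : Finset.univ.filter (fun j : Fin n => j < i ∧ η j = false ∧ ε' j = true)
        = D.erase j0 := by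
      ext k
      rw [Finset.mem_erase, hD]
      simp only [Finset.mem_filter, Finset.mem_univ, true_and]
      by_cases hk : k = j0
      · subst hk
        simp [hη, Function.update_self]
      · simp [hη, Function.update_of_ne hk, hk]
    have hcard : (Finset.univ.filter
        (fun j : Fin n => j < i ∧ η j = false ∧ ε' j = true)).card = m := by
      rw [hDη, Finset.card_erase_of_mem hj0D, hm]
      omega
    have IH := ih η hleη hcard
    rw [hDη] at IH
    have hbase : alphaE Cmat μ η i = alphaE Cmat μ ε i + cJ Cmat μ ε j0 i • alphaE Cmat μ ε j0 :=
      alphaE_update Cmat μ ε hj0i hεj0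
    have hαj0 : alphaE Cmat μ ε j0 = alphaE Cmat μ ε' j0 := by
      apply alphaE_congr
      intro k hk
      cases hεk : ε k with
      | true => exact (hle k hεk).symm
      | false =>
        cases hε'k : ε' k with
        | false => rfl
        | true =>
          exfalso
          have hkD : k ∈ D := by
            rw [hD]
            simp [Finset.mem_filter, hk.trans hj0i, hεk, hε'k]
          exact absurd (D.min'_le k hkD) (not_le.mpr hk)
    have hcJ : ∀ j ∈ D.erase j0, cJ Cmat μ η j i = cJ Cmat μ ε j i := by
      intro j hj
      obtain ⟨hjne, hjD⟩ := Finset.mem_erase.mp hj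
      have hj0j : j0 < j := lt_of_le_of_ne (D.min'_le j hjD) (Ne.symm hjne)
      apply cJ_congr
      intro k hk1 hk2
      rw [hη, Function.update_of_ne (ne_of_gt (hj0j.trans hk1))]
    have hsum : ∑ j ∈ D, cJ Cmat μ ε j i • alphaE Cmat μ ε' j =
        cJ Cmat μ ε j0 i • alphaE Cmat μ ε' j0 +
          ∑ j ∈ D.erase j0, cJ Cmat μ ε j i • alphaE Cmat μ ε' j :=
      (Finset.add_sum_erase D _ hj0D).symm
    have hsum2 : ∑ j ∈ D.erase j0, cJ Cmat μ η j i • alphaE Cmat μ ε' j =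
        ∑ j ∈ D.erase j0, cJ Cmat μ ε j i • alphaE Cmat μ ε' j :=
      Finset.sum_congr rfl (fun j hj => by rw [hcJ j hj])
    rw [IH, hbase, hαj0, hsum2, hsum]
    abel

end AlphaLemmas

end AuxLemmas

/-- for `i ∈ π₊(ε)`, pointwise in `F(ℰ; S)`:
`σ_{(i)} · σ_ε = σ_{(i)}(ε) · σ_ε + Σ_{j < i, j ∈ π₋(ε)} c_j · σ_{ε+(j)}`,
and each `c_j` is an integer. -/
theorem sig_ind_mul_sig_of_mem {B : Type} [Fintype B] [DecidableEq B]
    (Cmat : B → B → ℤ) (hgcm : IsGCM Cmat) {n : ℕ} (μ : Fin n → B)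
    (ε : Fin n → Bool) (i : Fin n) (hi : ε i = true) :
    (∀ ε' : Fin n → Bool,
        sigE Cmat μ (indE i) ε' * sigE Cmat μ ε ε' =
          sigE Cmat μ (indE i) ε * sigE Cmat μ ε ε' +
          ∑ j ∈ Finset.univ.filter (fun j : Fin n => j < i ∧ ε j = false),
            MvPolynomial.C (cJ Cmat μ ε j i) * sigE Cmat μ (addE ε (indE j)) ε') ∧
    (∀ j : Fin n, j < i → ε j = false → ∃ m : ℤ, cJ Cmat μ ε j i = (m : ℚ)) := by
  constructor
  · intro ε'
    by_cases hle : leE ε ε'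
    · -- main case
      have hi' : ε' i = true := hle i hi
      have hsig_ind : ∀ ε'' : Fin n → Bool, ε'' i = true →
          sigE Cmat μ (indE i) ε'' = toS (alphaE Cmat μ ε'' i) := by
        intro ε'' h
        simp only [sigE]
        rw [if_pos]
        · have hset : Finset.univ.filter (fun k : Fin n => indE i k = true) = {i} := by
            ext k
            simp [indE]
          rw [hset, Finset.prod_singleton]
        · intro k hk
          have hki : k = i := by simpa [indE] using hk
          subst hki; exact h
      have hsigP : sigE Cmat μ ε ε' =
          ∏ k ∈ Finset.univ.filter (fun k : Fin n => ε k = true), toS (alphaE Cmat μ ε' k) := by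
        simp only [sigE]
        rw [if_pos hle]
      have haddE : ∀ j : Fin n, ε j = false → addE ε (indE j) = Function.update ε j true := by
        intro j hεj
        funext k
        by_cases hk : k = j
        · subst hk
          simp [addE, indE, hεj]
        · simp [addE, indE, hk, Function.update_of_ne hk]
      have hterm : ∀ j : Fin n, ε j = false → ε' j = true →
          sigE Cmat μ (addE ε (indE j)) ε' = toS (alphaE Cmat μ ε' j) *
            ∏ k ∈ Finset.univ.filter (fun k : Fin n => ε k = true), toS (alphaE Cmat μ ε' k) := by
        intro j hεj hε'j
        rw [haddE j hεj]
        simp only [sigE]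
        rw [if_pos]
        · have hset : Finset.univ.filter (fun k : Fin n => Function.update ε j true k = true) =
              insert j (Finset.univ.filter (fun k : Fin n => ε k = true)) := by
            ext k
            by_cases hk : k = j
            · subst hk; simp
            · simp [Function.update_of_ne hk, hk]
          rw [hset, Finset.prod_insert (by simp [hεj])]
        · intro k hk
          by_cases hkj : k = j
          · subst hkj; exact hε'j
          · exact hle k (by rwa [Function.update_of_ne hkj] at hk)
      have hterm0 : ∀ j : Fin n, ε j = false → ε' j = false →
          sigE Cmat μ (addE ε (indE j)) ε' = 0 := by
        intro j hεj hε'j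
        rw [haddE j hεj]
        simp only [sigE]
        have hnot : ¬ leE (Function.update ε j true) ε' := by
          intro hcon
          have h2 := hcon j (by simp)
          rw [hε'j] at h2
          cases h2
        rw [if_neg hnot]
      have hsumeq : ∑ j ∈ Finset.univ.filter (fun j : Fin n => j < i ∧ ε j = false),
            MvPolynomial.C (cJ Cmat μ ε j i) * sigE Cmat μ (addE ε (indE j)) ε' =
          ∑ j ∈ Finset.univ.filter (fun j : Fin n => j < i ∧ ε j = false ∧ ε' j = true),
            MvPolynomial.C (cJ Cmat μ ε j i) * sigE Cmat μ (addE ε (indE j)) ε' := by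
        symm
        apply Finset.sum_subset
        · intro j hj
          simp only [Finset.mem_filter] at hj ⊢
          exact ⟨hj.1, hj.2.1, hj.2.2.1⟩
        · intro j hj hnj
          simp only [Finset.mem_filter, Finset.mem_univ, true_and] at hj hnj
          have hε'j : ε' j = false := by
            cases h : ε' j with
            | false => rfl
            | true => exact absurd ⟨hj.1, hj.2, h⟩ hnj
          rw [hterm0 j hj.2 hε'j, mul_zero]
      have hkey := alphaE_key Cmat μ ε' i
        (Finset.univ.filter (fun j : Fin n => j < i ∧ ε j = false ∧ ε' j = true)).card ε hle rfl
      have htoS : toS (alphaE Cmat μ ε' i) = toS (alphaE Cmat μ ε i) +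
          ∑ j ∈ Finset.univ.filter (fun j : Fin n => j < i ∧ ε j = false ∧ ε' j = true),
            MvPolynomial.C (cJ Cmat μ ε j i) * toS (alphaE Cmat μ ε' j) := by
        rw [hkey, toS_add, toS_sum]
        congr 1
        exact Finset.sum_congr rfl fun j _ => toS_smul _ _
      rw [hsig_ind ε' hi', hsig_ind ε hi, hsigP, hsumeq, htoS, add_mul, Finset.sum_mul]
      congr 1
      apply Finset.sum_congr rfl
      intro j hj
      simp only [Finset.mem_filter] at hj
      rw [hterm j hj.2.2.1 hj.2.2.2, mul_assoc]
    · -- case ¬ leE ε ε'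
      have hle' := hle
      simp only [leE] at hle'
      push_neg at hle'
      obtain ⟨k, hk1, hk2⟩ := hle'
      have hk2' : ε' k = false := by
        cases h : ε' k with
        | false => rfl
        | true => exact absurd h hk2
      have hsig0 : sigE Cmat μ ε ε' = 0 := by
        simp only [sigE]
        rw [if_neg hle]
      have hterm0 : ∀ j ∈ Finset.univ.filter (fun j : Fin n => j < i ∧ ε j = false),
          sigE Cmat μ (addE ε (indE j)) ε' = 0 := by
        intro j hj
        simp only [Finset.mem_filter] at hj
        simp only [sigE]
        have hnot : ¬ leE (addE ε (indE j)) ε' := by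
          intro hcon
          have hkj : ¬ k = j := by
            intro h
            rw [h, hj.2.2] at hk1
            cases hk1
          have h3 := hcon k (by simp [addE, indE, hkj, hk1])
          rw [hk2'] at h3
          cases h3
        rw [if_neg hnot]
      rw [hsig0, mul_zero, mul_zero]
      rw [Finset.sum_congr rfl (fun j hj => by rw [hterm0 j hj, mul_zero])]
      simp
  · intro j hji hεj
    have hint : IsIntVec (alphaJI Cmat μ ε j i) := by
      unfold alphaJI
      exact isIntVec_applyWord Cmat _ (isIntVec_simpleRoot (μ i))
    obtain ⟨p, hp⟩ := pairC_int Cmat hint (μ j)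
    exact ⟨-p, by unfold cJ; rw [hp]; push_cast; ring⟩
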